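/- arXiv:1404.2006 — 4 statements merged into one kernel-verified Lean document; each statement's English description precedes it below -/
import Mathlib

section
/- The information metric of a transfer function is independent of Blaschke factors: if h(z;ξ) = f(z;ξ)·b(z) where b is a finite Blaschke product with zeros independent of ξ, then the metric g_{μν} computed from h equals that computed from f. -/
open MeasureTheory

/-- The Fisher information metric of a linear system, computed from the spectral density
`S w ξ` on the unit circle (`z = e^{iw}`). -/
noncomputable def infoMetric (n : ℕ) (S : ℝ → (Fin n → ℝ) → ℝ) (μ ν : Fin n)
    (ξ : Fin n → ℝ) : ℝ :=
  (1 / (2 * Real.pi)) *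
    ∫ w in (-Real.pi)..Real.pi,
      deriv (fun t => Real.log (S w (Function.update ξ μ t))) (ξ μ) *
        deriv (fun t => Real.log (S w (Function.update ξ ν t))) (ξ ν)

lemma blaschke_factor_norm (a z : ℂ) (hz : ‖z‖ = 1) :
    ‖a - z‖ = ‖1 - starRingEnd ℂ a * z‖ := by
  have : 1 - starRingEnd ℂ a * z = -(z * starRingEnd ℂ (a - z)) := by
    have hz2 : z * starRingEnd ℂ z = 1 := by
      rw [Complex.mul_conj']
      norm_cast
      simp [hz]
    rw [map_sub]
    linear_combination -hz2
  rw [this, norm_neg, norm_mul, hz, RCLike.norm_conj, one_mul]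

lemma blaschke_norm_one (m : ℕ) (a : Fin m → ℂ) (ha : ∀ s, ‖a s‖ < 1) (b : ℂ → ℂ)
    (hb : ∀ z, b z = ∏ s : Fin m,
      if a s = 0 then z
      else ((‖a s‖ : ℂ) / a s) * ((a s - z) / (1 - starRingEnd ℂ (a s) * z)))
    (z : ℂ) (hz : ‖z‖ = 1) : ‖b z‖ = 1 := by
  rw [hb, norm_prod]
  apply Finset.prod_eq_one
  intro s _
  by_cases h : a s = 0
  · simp [h, hz]
  · rw [if_neg h]
    have hne : (1 - starRingEnd ℂ (a s) * z) ≠ 0 := by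
      intro hcon
      have : ‖starRingEnd ℂ (a s) * z‖ = 1 := by
        have : starRingEnd ℂ (a s) * z = 1 := by linear_combination -hcon
        rw [this, norm_one]
      rw [norm_mul, RCLike.norm_conj, hz, mul_one] at this
      exact absurd this (ne_of_lt (ha s))
    rw [norm_mul, norm_div, norm_div, blaschke_factor_norm (a s) z hz,
      div_self (by exact_mod_cast (norm_ne_zero_iff.mpr hne)), mul_one, Complex.norm_real, norm_norm,
      div_self (by simpa using h)]

/-- The information metric is independent of Blaschke factors: if
`h(z;ξ) = f(z;ξ)·b(z)` with `b` a finite Blaschke product whose zeros do not depend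
on `ξ`, the metrics computed from `h` and from `f` coincide. -/
theorem stmt6 (n m : ℕ) (f h : ℂ → (Fin n → ℝ) → ℂ) (a : Fin m → ℂ)
    (ha : ∀ s, ‖a s‖ < 1) (b : ℂ → ℂ)
    (hb : ∀ z, b z = ∏ s : Fin m,
      if a s = 0 then z
      else ((‖a s‖ : ℂ) / a s) * ((a s - z) / (1 - starRingEnd ℂ (a s) * z)))
    (hfac : ∀ z ξ, h z ξ = f z ξ * b z) (μ ν : Fin n) (ξ : Fin n → ℝ) :
    infoMetric n (fun w ξ => ‖h (Complex.exp (Complex.I * w)) ξ‖ ^ 2) μ ν ξ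
      = infoMetric n (fun w ξ => ‖f (Complex.exp (Complex.I * w)) ξ‖ ^ 2) μ ν ξ := by
  have key : (fun (w : ℝ) ξ => ‖h (Complex.exp (Complex.I * w)) ξ‖ ^ 2)
      = (fun (w : ℝ) ξ => ‖f (Complex.exp (Complex.I * w)) ξ‖ ^ 2) := by
    funext w ξ'
    have hz : ‖Complex.exp (Complex.I * w)‖ = 1 := by
      rw [Complex.norm_exp]
      simp
    rw [hfac, norm_mul, blaschke_norm_one m a ha b hb _ hz, mul_one]
  rw [key]
end

section
/- The 0-divergence between a signal filter h and the all-pass unit filter decomposes as D^{(0)}(1‖h) = K + F(ξ) + conj(F(ξ)), where K is the Kähler potential and F(ξ) = (1/2)·η₀(ξ)² is holomorphic in ξ. -/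
open MeasureTheory

/-- The logarithmic transfer function `log h(e^{iw};ξ) = Σ_{r≥0} η_r(ξ) e^{-irw}`. -/
noncomputable def Lser {n : ℕ} (η : ℕ → (Fin n → ℂ) → ℂ) (w : ℝ) (ξ : Fin n → ℂ) : ℂ :=
  ∑' r : ℕ, η r ξ * Complex.exp (-(Complex.I * (w : ℂ) * (r : ℕ)))

noncomputable def Eker (k : ℤ) (w : ℝ) : ℂ := Complex.exp (Complex.I * k * w)

lemma Eker_norm (k : ℤ) (w : ℝ) : ‖Eker k w‖ = 1 := by
  rw [Eker, Complex.norm_exp]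
  simp

lemma Eker_mul (j k : ℤ) (w : ℝ) : Eker j w * Eker k w = Eker (j + k) w := by
  rw [Eker, Eker, Eker, ← Complex.exp_add]
  congr 1
  push_cast
  ring

lemma Eker_integral (k : ℤ) :
    (∫ w in (0:ℝ)..(2 * Real.pi), Eker k w) =
      if k = 0 then (2 * Real.pi : ℂ) else 0 := by
  rcases eq_or_ne k 0 with h | h
  · simp [Eker, h]
  · rw [if_neg h]
    have hk : (Complex.I * k) ≠ 0 := by
      simp [Complex.I_ne_zero, Complex.ext_iff]
      exact_mod_cast h
    have : (∫ w in (0:ℝ)..(2 * Real.pi), Eker k w)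
        = ∫ w in (0:ℝ)..(2 * Real.pi), Complex.exp ((Complex.I * k) * w) := rfl
    rw [this, integral_exp_mul_complex hk]
    have h1 : Complex.exp (Complex.I * k * (2 * Real.pi : ℝ)) = 1 := by
      have := Complex.exp_int_mul_two_pi_mul_I k
      rw [← this]
      congr 1
      push_cast
      ring
    rw [h1]
    simp

lemma Eker_cont (k : ℤ) : Continuous (Eker k) := by
  unfold Eker
  fun_prop

/-- Key interchange lemma. -/
lemma key_integral (a : ℕ × ℕ → ℂ) (ha : Summable fun p => ‖a p‖) (m : ℕ × ℕ → ℤ) :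
    (∫ w in (0:ℝ)..(2 * Real.pi), ∑' p, a p * Eker (m p) w)
      = ∑' p, a p * (if m p = 0 then (2 * Real.pi : ℂ) else 0) := by
  have h2π : (0:ℝ) ≤ 2 * Real.pi := by positivity
  rw [intervalIntegral.integral_of_le h2π]
  have hint : ∀ p : ℕ × ℕ, Integrable (fun w => a p * Eker (m p) w)
      (volume.restrict (Set.Ioc (0:ℝ) (2 * Real.pi))) := by
    intro p
    exact (continuous_const.mul (Eker_cont (m p))).integrableOn_Ioc
  have hnorm : ∀ p : ℕ × ℕ,
      (∫ w in Set.Ioc (0:ℝ) (2 * Real.pi), ‖a p * Eker (m p) w‖) = (2 * Real.pi) * ‖a p‖ := by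
    intro p
    have : ∀ w : ℝ, ‖a p * Eker (m p) w‖ = ‖a p‖ := by
      intro w; rw [norm_mul, Eker_norm, mul_one]
    simp only [this]
    rw [setIntegral_const, Real.volume_real_Ioc, smul_eq_mul]
    rw [sub_zero, max_eq_left (by positivity)]
  rw [← MeasureTheory.integral_tsum_of_summable_integral_norm hint]
  · refine tsum_congr fun p => ?_
    have : (∫ w in Set.Ioc (0:ℝ) (2 * Real.pi), a p * Eker (m p) w)
        = a p * ∫ w in Set.Ioc (0:ℝ) (2 * Real.pi), Eker (m p) w := by
      rw [MeasureTheory.integral_const_mul]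
    rw [this, ← intervalIntegral.integral_of_le h2π, Eker_integral]
  · simp only [hnorm]
    exact ha.mul_left _

lemma tsum_Eker_cont (a : ℕ × ℕ → ℂ) (ha : Summable fun p => ‖a p‖) (m : ℕ × ℕ → ℤ) :
    Continuous (fun w => ∑' p, a p * Eker (m p) w) :=
  continuous_tsum (fun p => continuous_const.mul (Eker_cont _)) ha
    (fun p w => by rw [norm_mul, Eker_norm, mul_one])

set_option maxHeartbeats 1000000 in
lemma main_aux (c d : ℕ → ℂ) (hd : ∀ r, d r = starRingEnd ℂ (c r))
    (habs : Summable fun r : ℕ => ‖c r‖) (habs' : Summable fun r : ℕ => ‖d r‖)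
    (L : ℝ → ℂ) (hL : ∀ w : ℝ, L w = ∑' r : ℕ, c r * Eker (-(r : ℤ)) w) :
    (1 / (2 * (Real.pi : ℂ))) *
        ∫ w in (0 : ℝ)..(2 * Real.pi), (1 / 2 : ℂ) * (L w + starRingEnd ℂ (L w)) ^ 2
      = (∑' r : ℕ, c r * d r) + (1 / 2 : ℂ) * (c 0) ^ 2 + (1 / 2 : ℂ) * (d 0) ^ 2 := by
  have hCL : ∀ w : ℝ, starRingEnd ℂ (L w) = ∑' r : ℕ, d r * Eker (r : ℤ) w := by
    intro w
    rw [hL w, starRingEnd_apply, tsum_star]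
    refine tsum_congr fun r => ?_
    rw [star_mul']
    rw [hd r, starRingEnd_apply]
    congr 1
    simp only [Eker]
    rw [← starRingEnd_apply, ← Complex.exp_conj]
    congr 1
    push_cast
    simp only [map_mul, map_neg, Complex.conj_I, Complex.conj_ofReal, Complex.conj_natCast]
    ring
  -- summability of coefficient families
  have hs1 : Summable fun p : ℕ × ℕ => ‖c p.1 * c p.2‖ := habs.mul_norm habs
  have hs2 : Summable fun p : ℕ × ℕ => ‖c p.1 * d p.2‖ := habs.mul_norm habs'
  have hs3 : Summable fun p : ℕ × ℕ => ‖d p.1 * d p.2‖ := habs'.mul_norm habs'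
  have hnf : ∀ (k : ℕ → ℤ) (e : ℕ → ℂ) (w : ℝ), (Summable fun r => ‖e r‖) →
      Summable fun r => ‖e r * Eker (k r) w‖ := by
    intro k e w he
    refine he.congr fun r => ?_
    rw [norm_mul, Eker_norm, mul_one]
  -- product expansions
  have hA : ∀ w : ℝ, L w * L w
      = ∑' p : ℕ × ℕ, (c p.1 * c p.2) * Eker (-(p.1 : ℤ) + -(p.2 : ℤ)) w := by
    intro w
    have hsc := hnf (fun r => -(r : ℤ)) c w habs
    rw [hL w, tsum_mul_tsum_of_summable_norm hsc hsc]
    refine tsum_congr fun p => ?_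
    rw [← Eker_mul]
    ring
  have hB : ∀ w : ℝ, L w * starRingEnd ℂ (L w)
      = ∑' p : ℕ × ℕ, (c p.1 * d p.2) * Eker (-(p.1 : ℤ) + (p.2 : ℤ)) w := by
    intro w
    have hsc := hnf (fun r => -(r : ℤ)) c w habs
    have hsc' := hnf (fun r => (r : ℤ)) d w habs'
    rw [hCL w, hL w, tsum_mul_tsum_of_summable_norm hsc hsc']
    refine tsum_congr fun p => ?_
    rw [← Eker_mul]
    ring
  have hC : ∀ w : ℝ, starRingEnd ℂ (L w) * starRingEnd ℂ (L w)
      = ∑' p : ℕ × ℕ, (d p.1 * d p.2) * Eker ((p.1 : ℤ) + (p.2 : ℤ)) w := by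
    intro w
    have hsc' := hnf (fun r => (r : ℤ)) d w habs'
    rw [hCL w, tsum_mul_tsum_of_summable_norm hsc' hsc']
    refine tsum_congr fun p => ?_
    rw [← Eker_mul]
    ring
  -- abbreviations
  set A : ℝ → ℂ := fun w => ∑' p : ℕ × ℕ, (c p.1 * c p.2) * Eker (-(p.1 : ℤ) + -(p.2 : ℤ)) w
    with hAdef
  set B : ℝ → ℂ := fun w => ∑' p : ℕ × ℕ, (c p.1 * d p.2) * Eker (-(p.1 : ℤ) + (p.2 : ℤ)) w
    with hBdef
  set C : ℝ → ℂ := fun w => ∑' p : ℕ × ℕ, (d p.1 * d p.2) * Eker ((p.1 : ℤ) + (p.2 : ℤ)) w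
    with hCdef
  have hint : ∀ w : ℝ, (1 / 2 : ℂ) * (L w + starRingEnd ℂ (L w)) ^ 2
      = (1 / 2 : ℂ) * A w + B w + (1 / 2 : ℂ) * C w := by
    intro w
    have h0 : (1 / 2 : ℂ) * (L w + starRingEnd ℂ (L w)) ^ 2
        = (1 / 2 : ℂ) * (L w * L w) + L w * starRingEnd ℂ (L w)
          + (1 / 2 : ℂ) * (starRingEnd ℂ (L w) * starRingEnd ℂ (L w)) := by ring
    rw [h0, hA w, hB w, hC w]
  -- integrability
  have hintegrA : IntervalIntegrable A MeasureTheory.volume 0 (2 * Real.pi) :=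
    (tsum_Eker_cont _ hs1 _).intervalIntegrable _ _
  have hintegrB : IntervalIntegrable B MeasureTheory.volume 0 (2 * Real.pi) :=
    (tsum_Eker_cont _ hs2 _).intervalIntegrable _ _
  have hintegrC : IntervalIntegrable C MeasureTheory.volume 0 (2 * Real.pi) :=
    (tsum_Eker_cont _ hs3 _).intervalIntegrable _ _
  have hsplit : (∫ w in (0 : ℝ)..(2 * Real.pi),
        (1 / 2 : ℂ) * (L w + starRingEnd ℂ (L w)) ^ 2)
      = (1 / 2 : ℂ) * (∫ w in (0 : ℝ)..(2 * Real.pi), A w)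
        + (∫ w in (0 : ℝ)..(2 * Real.pi), B w)
        + (1 / 2 : ℂ) * (∫ w in (0 : ℝ)..(2 * Real.pi), C w) := by
    rw [intervalIntegral.integral_congr (g := fun w => (1 / 2 : ℂ) * A w + B w + (1 / 2 : ℂ) * C w)
      (fun w _ => hint w)]
    rw [intervalIntegral.integral_add ((hintegrA.const_mul _).add hintegrB) (hintegrC.const_mul _),
      intervalIntegral.integral_add (hintegrA.const_mul _) hintegrB,
      intervalIntegral.integral_const_mul, intervalIntegral.integral_const_mul]
  -- evaluate the three integrals
  have hIA : (∫ w in (0 : ℝ)..(2 * Real.pi), A w) = c 0 * c 0 * (2 * Real.pi : ℂ) := by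
    rw [hAdef, key_integral _ hs1 _]
    rw [tsum_eq_single ((0, 0) : ℕ × ℕ) ?_]
    · norm_num
    · intro p hp
      obtain ⟨x, y⟩ := p
      have hne : ¬(-(x : ℤ) + -(y : ℤ) = 0) := by
        intro h
        apply hp
        have hx : x = 0 ∧ y = 0 := by omega
        rw [hx.1, hx.2]
      rw [if_neg hne, mul_zero]
  have hIC : (∫ w in (0 : ℝ)..(2 * Real.pi), C w) = d 0 * d 0 * (2 * Real.pi : ℂ) := by
    rw [hCdef, key_integral _ hs3 _]
    rw [tsum_eq_single ((0, 0) : ℕ × ℕ) ?_]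
    · norm_num
    · intro p hp
      obtain ⟨x, y⟩ := p
      have hne : ¬((x : ℤ) + (y : ℤ) = 0) := by
        intro h
        apply hp
        have hx : x = 0 ∧ y = 0 := by omega
        rw [hx.1, hx.2]
      rw [if_neg hne, mul_zero]
  have hIB : (∫ w in (0 : ℝ)..(2 * Real.pi), B w)
      = (∑' r : ℕ, c r * d r) * (2 * Real.pi : ℂ) := by
    rw [hBdef, key_integral _ hs2 _]
    have hdiag : ∀ p : ℕ × ℕ,
        (c p.1 * d p.2) * (if (-(p.1 : ℤ) + (p.2 : ℤ)) = 0 then (2 * Real.pi : ℂ) else 0)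
        = (fun p : ℕ × ℕ => if p.1 = p.2 then
            c p.1 * d p.2 * (2 * Real.pi : ℂ) else 0) p := by
      intro p
      by_cases h : p.1 = p.2
      · simp only
        rw [if_pos (show -(p.1 : ℤ) + (p.2 : ℤ) = 0 by omega), if_pos h]
      · simp only
        rw [if_neg (show ¬(-(p.1 : ℤ) + (p.2 : ℤ) = 0) by omega), if_neg h, mul_zero]
    rw [tsum_congr hdiag]
    have hinj : Function.Injective (fun r : ℕ => ((r, r) : ℕ × ℕ)) := by
      intro a b h
      simpa [Prod.ext_iff] using h
    rw [← Function.Injective.tsum_eq hinj ?_]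
    · have hr : ∀ r : ℕ, (fun p : ℕ × ℕ => if p.1 = p.2 then
          c p.1 * d p.2 * (2 * Real.pi : ℂ) else 0) (r, r)
          = c r * d r * (2 * Real.pi : ℂ) := fun r => if_pos rfl
      rw [tsum_congr hr, tsum_mul_right]
    · intro p hp
      simp only [Function.mem_support, ne_eq] at hp
      by_contra hr
      apply hp
      rw [if_neg]
      intro h
      exact hr ⟨p.1, by simp [Prod.ext_iff, h]⟩
  -- final arithmetic
  rw [hsplit, hIA, hIB, hIC]
  have hπ : ((Real.pi : ℂ)) ≠ 0 := Complex.ofReal_ne_zero.mpr Real.pi_ne_zero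
  field_simp
  ring

/-- The 0-divergence between the all-pass unit filter and `h` decomposes as
`D^{(0)}(1‖h) = K + F(ξ) + conj(F(ξ))` with `K = Σ_r |η_r|²` the Kähler potential and
`F = (1/2)η₀²` holomorphic. -/
theorem stmt11 {n : ℕ} (η : ℕ → (Fin n → ℂ) → ℂ) (ξ : Fin n → ℂ)
    (habs : Summable fun r : ℕ => ‖η r ξ‖) :
    (1 / (2 * (Real.pi : ℂ))) *
        ∫ w in (0 : ℝ)..(2 * Real.pi),
          (1 / 2 : ℂ) * (Lser η w ξ + starRingEnd ℂ (Lser η w ξ)) ^ 2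
      = (∑' r : ℕ, η r ξ * starRingEnd ℂ (η r ξ))
        + (1 / 2 : ℂ) * (η 0 ξ) ^ 2 + starRingEnd ℂ ((1 / 2 : ℂ) * (η 0 ξ) ^ 2) := by
  obtain ⟨d, hd⟩ : ∃ d : ℕ → ℂ, ∀ r, d r = starRingEnd ℂ (η r ξ) :=
    ⟨fun r => starRingEnd ℂ (η r ξ), fun _ => rfl⟩
  have habs' : Summable fun r : ℕ => ‖d r‖ := by
    refine habs.congr fun r => ?_
    rw [hd r, starRingEnd_apply, norm_star]
  have hL : ∀ w : ℝ, Lser η w ξ = ∑' r : ℕ, η r ξ * Eker (-(r : ℤ)) w := by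
    intro w
    refine tsum_congr fun r => ?_
    congr 1
    unfold Eker
    congr 1
    push_cast
    ring
  have := main_aux (fun r => η r ξ) d hd habs habs' (fun w => Lser η w ξ) hL
  rw [this]
  have h1 : (∑' r : ℕ, η r ξ * d r) = ∑' r : ℕ, η r ξ * starRingEnd ℂ (η r ξ) :=
    tsum_congr fun r => by rw [hd r]
  have h2 : starRingEnd ℂ ((1 / 2 : ℂ) * (η 0 ξ) ^ 2) = (1 / 2 : ℂ) * (d 0) ^ 2 := by
    rw [map_mul, map_pow, hd 0, map_div₀, map_one, map_ofNat]
  rw [h1, h2]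
end

section
/- For the complexified ARMA(p,q) model with logarithmic transfer function log h = log(σ²/2π) + Σ_{i=1}^{n} c_i log(1 − ξ^i z^{−1}), n = p+q, c_i ∈ {−1,+1}, |ξ^i| < 1, the Kähler potential on the constant-σ submanifold is K = Σ_{r=1}^{∞} (1/r²) |Σ_{i=1}^{n} c_i (ξ^i)^r|². -/
open MeasureTheory
open scoped ComplexConjugate

private lemma norm_exp_I_mul_real (y w : ℝ) : ‖Complex.exp (Complex.I * y * w)‖ = 1 := by
  have h : Complex.I * (y : ℂ) * (w : ℂ) = ((y * w : ℝ) : ℂ) * Complex.I := by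
    push_cast; ring
  rw [h]
  exact Complex.norm_exp_ofReal_mul_I _

private theorem kahler_aux {n : ℕ} (c : Fin n → ℤ) (hc : ∀ i, c i = 1 ∨ c i = -1)
    (ξ : Fin n → ℂ) (hξ : ∀ i, ‖ξ i‖ < 1) :
    (∫ w in (0 : ℝ)..(2 * Real.pi),
        ‖∑ i, (c i : ℂ) * Complex.log (1 - ξ i * Complex.exp (-(Complex.I * (w : ℂ))))‖ ^ 2)
      = (2 * Real.pi) *
          ∑' r : ℕ, (1 / ((r + 1 : ℕ) : ℝ) ^ 2) * ‖∑ i, (c i : ℂ) * (ξ i) ^ (r + 1)‖ ^ 2 := by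
  classical
  have pi_pos := Real.pi_pos
  set E : ℝ → ℂ := fun w => Complex.exp (-(Complex.I * w)) with hE
  set b : ℕ → ℂ := fun m => ∑ i, (c i : ℂ) * ξ i ^ m with hb
  set a : ℕ → ℂ := fun r => -(b (r + 1) / ((r + 1 : ℕ) : ℂ)) with ha
  set f : ℝ → ℂ := fun w => ∑ i, (c i : ℂ) * Complex.log (1 - ξ i * E w) with hf
  clear_value E b a f
  have hnc : ∀ i, ‖(c i : ℂ)‖ = 1 := by
    intro i; rcases hc i with h | h <;> simp [h]
  have hnE : ∀ w : ℝ, ‖E w‖ = 1 := by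
    intro w
    have h : -(Complex.I * (w : ℂ)) = Complex.I * ((-1 : ℝ) : ℂ) * (w : ℂ) := by push_cast; ring
    rw [hE]; simp only [h]
    exact norm_exp_I_mul_real (-1) w
  have hzlt : ∀ (i : Fin n) (w : ℝ), ‖ξ i * E w‖ < 1 := by
    intro i w; rw [norm_mul, hnE, mul_one]; exact hξ i
  have hnar : ∀ r : ℕ, ‖a r‖ = ‖b (r + 1)‖ / ((r + 1 : ℕ) : ℝ) := by
    intro r; rw [ha, norm_neg, norm_div, Complex.norm_natCast]
  have hna : ∀ r : ℕ, ‖a r‖ ≤ ∑ i, ‖ξ i‖ ^ (r + 1) := by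
    intro r
    have h2 : ‖b (r + 1)‖ ≤ ∑ i, ‖ξ i‖ ^ (r + 1) := by
      rw [hb]
      refine (norm_sum_le _ _).trans (Finset.sum_le_sum fun i _ => ?_)
      rw [norm_mul, hnc i, one_mul, norm_pow]
    have h3 : ‖b (r + 1)‖ / ((r + 1 : ℕ) : ℝ) ≤ ‖b (r + 1)‖ := by
      apply div_le_self (norm_nonneg _)
      exact_mod_cast Nat.one_le_iff_ne_zero.mpr (Nat.succ_ne_zero r)
    calc ‖a r‖ = _ := hnar r
      _ ≤ ‖b (r + 1)‖ := h3
      _ ≤ _ := h2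
  have hSgeom : Summable (fun r : ℕ => ∑ i, ‖ξ i‖ ^ (r + 1)) := by
    apply summable_sum
    intro i _
    have h : Summable (fun r : ℕ => ‖ξ i‖ ^ r * ‖ξ i‖) :=
      (summable_geometric_of_lt_one (norm_nonneg _) (hξ i)).mul_right _
    simpa [pow_succ] using h
  have hsa : Summable (fun r : ℕ => ‖a r‖) :=
    Summable.of_nonneg_of_le (fun r => norm_nonneg _) hna hSgeom
  -- pointwise expansion of f
  have hfsum : ∀ w : ℝ, HasSum (fun r : ℕ => a r * E w ^ (r + 1)) (f w) := by
    intro w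
    have hterm : ∀ i : Fin n,
        HasSum (fun r : ℕ => -((c i : ℂ)) * ((ξ i * E w) ^ (r + 1) / ((r + 1 : ℕ) : ℂ)))
          ((c i : ℂ) * Complex.log (1 - ξ i * E w)) := by
      intro i
      have h0 := Complex.hasSum_taylorSeries_neg_log (hzlt i w)
      have h1 := (hasSum_nat_add_iff'
        (f := fun m : ℕ => (ξ i * E w) ^ m / (m : ℂ)) 1).mpr h0
      simp only [Finset.range_one, Finset.sum_singleton, pow_zero, Nat.cast_zero, div_zero,
        sub_zero] at h1
      have h2 := h1.mul_left (-((c i : ℂ)))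
      simpa only [neg_mul_neg] using h2
    have hsum := hasSum_sum (s := Finset.univ)
      (f := fun (i : Fin n) (r : ℕ) =>
        -((c i : ℂ)) * ((ξ i * E w) ^ (r + 1) / ((r + 1 : ℕ) : ℂ)))
      (fun i _ => hterm i)
    have heq : (fun r : ℕ => ∑ i, -((c i : ℂ)) * ((ξ i * E w) ^ (r + 1) / ((r + 1 : ℕ) : ℂ)))
        = fun r : ℕ => a r * E w ^ (r + 1) := by
      funext r
      simp only [ha, hb]
      rw [neg_mul, div_mul_eq_mul_div, Finset.sum_mul, Finset.sum_div, ← Finset.sum_neg_distrib]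
      refine Finset.sum_congr rfl fun i _ => ?_
      rw [mul_pow]
      ring
    rw [hf]
    exact heq ▸ hsum
  -- continuity of f
  have hfc : Continuous f := by
    rw [hf]
    refine continuous_finset_sum _ fun i _ => continuous_const.mul ?_
    have hg : Continuous fun w : ℝ => 1 - ξ i * E w := by
      rw [hE]; fun_prop
    refine continuous_iff_continuousAt.2 fun w => ?_
    refine (continuousAt_clog ?_).comp hg.continuousAt
    refine Or.inl ?_
    have h1 : (ξ i * E w).re ≤ ‖ξ i * E w‖ := Complex.re_le_norm _
    have h2 := hzlt i w
    simp only [Complex.sub_re, Complex.one_re]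
    linarith
  -- product expansion
  set G : ℕ × ℕ → ℝ → ℂ := fun p w =>
    a p.1 * conj (a p.2) *
      Complex.exp (Complex.I * ((((p.2 : ℤ) - (p.1 : ℤ)) : ℤ) : ℂ) * (w : ℂ)) with hG
  clear_value G
  have hGnorm : ∀ (p : ℕ × ℕ) (w : ℝ), ‖G p w‖ = ‖a p.1‖ * ‖a p.2‖ := by
    intro p w
    have h : Complex.I * ((((p.2 : ℤ) - (p.1 : ℤ)) : ℤ) : ℂ) * (w : ℂ)
        = Complex.I * ((((p.2 : ℤ) - (p.1 : ℤ) : ℤ) : ℝ) : ℂ) * (w : ℂ) := by push_cast; ring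
    rw [hG]
    simp only [h, norm_mul, norm_exp_I_mul_real, mul_one, RCLike.norm_conj]
  have hGsum : ∀ w : ℝ, HasSum (fun p : ℕ × ℕ => G p w) (f w * conj (f w)) := by
    intro w
    have hstar : HasSum (fun s : ℕ => conj (a s * E w ^ (s + 1))) (conj (f w)) :=
      (hfsum w).star
    have hsummable : Summable (fun p : ℕ × ℕ =>
        (a p.1 * E w ^ (p.1 + 1)) * conj (a p.2 * E w ^ (p.2 + 1))) := by
      apply Summable.of_norm_bounded (Summable.mul_of_nonneg (f := fun r : ℕ => ‖a r‖)
        (g := fun r : ℕ => ‖a r‖) hsa hsa (fun r => norm_nonneg _) (fun r => norm_nonneg _))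
      intro p
      simp only [norm_mul, RCLike.norm_conj, norm_pow, hnE, one_pow, mul_one]
      exact le_refl _
    have hmul := (hfsum w).mul hstar hsummable
    have heq : (fun p : ℕ × ℕ => (a p.1 * E w ^ (p.1 + 1)) * conj (a p.2 * E w ^ (p.2 + 1)))
        = fun p : ℕ × ℕ => G p w := by
      funext p
      rw [hG, hE]
      simp only [map_mul, map_pow, ← Complex.exp_conj, map_neg, Complex.conj_I,
        Complex.conj_ofReal, neg_neg]
      rw [← Complex.exp_nat_mul, ← Complex.exp_nat_mul]
      rw [mul_mul_mul_comm, ← Complex.exp_add]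
      congr 1
      push_cast
      ring
    exact heq ▸ hmul
  -- integral of each G p
  have hGint : ∀ p : ℕ × ℕ, (∫ w in (0 : ℝ)..(2 * Real.pi), G p w)
      = if p.1 = p.2 then ((2 * Real.pi : ℝ) : ℂ) * (a p.1 * conj (a p.1)) else 0 := by
    intro p
    set m : ℤ := (p.2 : ℤ) - (p.1 : ℤ) with hm
    have hsplit : ∀ w : ℝ, G p w = (a p.1 * conj (a p.2)) *
        Complex.exp ((Complex.I * (m : ℂ)) * (w : ℂ)) := by
      intro w; rw [hG]
    rw [intervalIntegral.integral_congr (g := fun w : ℝ =>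
      (a p.1 * conj (a p.2)) * Complex.exp ((Complex.I * (m : ℂ)) * (w : ℂ)))
      (fun w _ => hsplit w)]
    rw [intervalIntegral.integral_const_mul]
    by_cases hdiag : p.1 = p.2
    · have hm0 : m = 0 := by rw [hm, hdiag]; ring
      simp only [hm0, Int.cast_zero, mul_zero, zero_mul, Complex.exp_zero]
      rw [if_pos hdiag, intervalIntegral.integral_const, hdiag, sub_zero, Complex.real_smul,
        mul_one]
      push_cast
      ring
    · have hm0 : (m : ℂ) ≠ 0 := by
        simp only [ne_eq, Int.cast_eq_zero, hm, sub_eq_zero]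
        exact fun h => hdiag (by exact_mod_cast h.symm)
      have hc0 : Complex.I * (m : ℂ) ≠ 0 := mul_ne_zero Complex.I_ne_zero hm0
      rw [integral_exp_mul_complex hc0]
      have h1 : Complex.exp (Complex.I * (m : ℂ) * ((2 * Real.pi : ℝ) : ℂ)) = 1 := by
        have h : Complex.I * (m : ℂ) * ((2 * Real.pi : ℝ) : ℂ)
            = (m : ℂ) * (2 * (Real.pi : ℂ) * Complex.I) := by push_cast; ring
        rw [h, Complex.exp_int_mul_two_pi_mul_I]
      rw [if_neg hdiag, h1]
      simp
  -- interchange of integral and sum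
  have h2pi : (0 : ℝ) ≤ 2 * Real.pi := by positivity
  have hintG : (∫ w in (0 : ℝ)..(2 * Real.pi), f w * conj (f w))
      = ∑' p : ℕ × ℕ, ∫ w in (0 : ℝ)..(2 * Real.pi), G p w := by
    have hmeas : ∀ p : ℕ × ℕ, AEStronglyMeasurable (G p)
        (volume.restrict (Set.Ioc (0 : ℝ) (2 * Real.pi))) := by
      intro p
      apply Continuous.aestronglyMeasurable
      rw [hG]; fun_prop
    have hlint : ∀ p : ℕ × ℕ,
        (∫⁻ w in Set.Ioc (0 : ℝ) (2 * Real.pi), ‖G p w‖₊)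
          = ((‖a p.1‖₊ * ‖a p.2‖₊ : NNReal) : ENNReal) * ENNReal.ofReal (2 * Real.pi) := by
      intro p
      have hptwise : ∀ w : ℝ,
          (‖G p w‖₊ : ENNReal) = ((‖a p.1‖₊ * ‖a p.2‖₊ : NNReal) : ENNReal) := by
        intro w
        congr 1
        ext
        simp [hGnorm p w]
      calc (∫⁻ w in Set.Ioc (0 : ℝ) (2 * Real.pi), ‖G p w‖₊)
          = ∫⁻ _ in Set.Ioc (0 : ℝ) (2 * Real.pi),
              ((‖a p.1‖₊ * ‖a p.2‖₊ : NNReal) : ENNReal) := lintegral_congr fun w => hptwise w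
        _ = _ := by rw [setLIntegral_const, Real.volume_Ioc, sub_zero]
    have hfin : (∑' p : ℕ × ℕ, ∫⁻ w in Set.Ioc (0 : ℝ) (2 * Real.pi), ‖G p w‖₊) ≠ ⊤ := by
      rw [tsum_congr hlint, ENNReal.tsum_mul_right]
      apply ENNReal.mul_ne_top _ ENNReal.ofReal_ne_top
      rw [ENNReal.tsum_coe_ne_top_iff_summable, ← NNReal.summable_coe]
      simp only [NNReal.coe_mul, coe_nnnorm]
      exact Summable.mul_of_nonneg (f := fun r : ℕ => ‖a r‖) (g := fun r : ℕ => ‖a r‖) hsa hsa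
        (fun r => norm_nonneg _) (fun r => norm_nonneg _)
    have hcongr : ∀ w : ℝ, f w * conj (f w) = ∑' p : ℕ × ℕ, G p w :=
      fun w => (hGsum w).tsum_eq.symm
    rw [intervalIntegral.integral_of_le h2pi]
    rw [setIntegral_congr_fun measurableSet_Ioc (fun w _ => hcongr w)]
    rw [MeasureTheory.integral_tsum hmeas hfin]
    exact tsum_congr fun p => (intervalIntegral.integral_of_le h2pi).symm
  -- summability of ‖a r‖ ^ 2
  have hsq : Summable (fun r : ℕ => ‖a r‖ ^ 2) := by
    have hC : ∀ r : ℕ, ‖a r‖ ≤ ∑' s : ℕ, ‖a s‖ :=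
      fun r => Summable.le_tsum hsa r fun j _ => norm_nonneg _
    refine Summable.of_nonneg_of_le (fun r => sq_nonneg _) (fun r => ?_) (hsa.mul_left
      (∑' s : ℕ, ‖a s‖))
    rw [sq]
    exact mul_le_mul_of_nonneg_right (hC r) (norm_nonneg _)
  -- diagonal sum
  have hdiagsum : (∑' p : ℕ × ℕ,
        (if p.1 = p.2 then ((2 * Real.pi : ℝ) : ℂ) * (a p.1 * conj (a p.1)) else 0))
      = ((2 * Real.pi : ℝ) : ℂ) * ((∑' r : ℕ, ‖a r‖ ^ 2 : ℝ) : ℂ) := by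
    have hsum2 : Summable (fun p : ℕ × ℕ =>
        (if p.1 = p.2 then ((2 * Real.pi : ℝ) : ℂ) * (a p.1 * conj (a p.1)) else 0)) := by
      apply Summable.of_norm_bounded ((Summable.mul_of_nonneg (f := fun r : ℕ => ‖a r‖)
        (g := fun r : ℕ => ‖a r‖) hsa hsa (fun r => norm_nonneg _)
        (fun r => norm_nonneg _)).mul_left (2 * Real.pi))
      rintro ⟨r, s⟩
      by_cases hrs : r = s
      · subst hrs
        simp only [eq_self_iff_true, if_true, norm_mul, RCLike.norm_conj, Complex.norm_real,
          Real.norm_eq_abs, abs_of_nonneg h2pi]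
        refine le_of_eq ?_
        rw [abs_of_nonneg (by norm_num : (0:ℝ) ≤ 2), abs_of_nonneg Real.pi_pos.le]
        try ring
      · simp only [if_neg hrs, norm_zero]
        positivity
    rw [Summable.tsum_prod' hsum2 hsum2.prod_factor]
    have hinner : ∀ r : ℕ, (∑' s : ℕ,
        (if r = s then ((2 * Real.pi : ℝ) : ℂ) * (a r * conj (a r)) else 0))
        = ((2 * Real.pi : ℝ) : ℂ) * ((‖a r‖ ^ 2 : ℝ) : ℂ) := by
      intro r
      rw [tsum_eq_single r (fun s hs => if_neg fun h => hs (h.symm))]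
      rw [if_pos rfl]
      congr 1
      rw [Complex.mul_conj]
      norm_cast
      rw [Complex.normSq_eq_norm_sq]
    calc (∑' (r : ℕ) (s : ℕ),
          (if (r, s).1 = (r, s).2 then ((2 * Real.pi : ℝ) : ℂ) * (a (r,s).1 * conj (a (r,s).1))
            else 0))
        = ∑' r : ℕ, ((2 * Real.pi : ℝ) : ℂ) * ((‖a r‖ ^ 2 : ℝ) : ℂ) := tsum_congr hinner
      _ = ((2 * Real.pi : ℝ) : ℂ) * ∑' r : ℕ, ((‖a r‖ ^ 2 : ℝ) : ℂ) := tsum_mul_left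
      _ = _ := by rw [← Complex.ofReal_tsum]
  -- the complex integral
  have key : (∫ w in (0 : ℝ)..(2 * Real.pi), f w * conj (f w))
      = ((2 * Real.pi : ℝ) : ℂ) * ((∑' r : ℕ, ‖a r‖ ^ 2 : ℝ) : ℂ) := by
    rw [hintG, tsum_congr hGint, hdiagsum]
  -- extract real part
  have hre : (∫ w in (0 : ℝ)..(2 * Real.pi), ‖f w‖ ^ 2)
      = (∫ w in (0 : ℝ)..(2 * Real.pi), f w * conj (f w)).re := by
    have hInt : IntervalIntegrable (fun w => f w * conj (f w)) volume 0 (2 * Real.pi) := by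
      apply Continuous.intervalIntegrable
      exact hfc.mul (continuous_star.comp hfc)
    have hcomm := Complex.reCLM.intervalIntegral_comp_comm hInt
    calc (∫ w in (0 : ℝ)..(2 * Real.pi), ‖f w‖ ^ 2)
        = ∫ w in (0 : ℝ)..(2 * Real.pi), Complex.reCLM (f w * conj (f w)) := by
          refine intervalIntegral.integral_congr fun w _ => ?_
          simp only [Complex.reCLM_apply]
          rw [Complex.mul_conj, Complex.ofReal_re, Complex.normSq_eq_norm_sq]
      _ = Complex.reCLM (∫ w in (0 : ℝ)..(2 * Real.pi), f w * conj (f w)) := hcomm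
      _ = _ := rfl
  -- conclude
  have hgoal : (∫ w in (0 : ℝ)..(2 * Real.pi),
      ‖∑ i, (c i : ℂ) * Complex.log (1 - ξ i * Complex.exp (-(Complex.I * (w : ℂ))))‖ ^ 2)
      = ∫ w in (0 : ℝ)..(2 * Real.pi), ‖f w‖ ^ 2 := by
    rw [hf, hE]
  rw [hgoal, hre, key]
  rw [← Complex.ofReal_mul, Complex.ofReal_re]
  congr 1
  refine tsum_congr fun r => ?_
  rw [hnar r, div_pow, hb]
  field_simp

/-- For the complexified ARMA(p,q) model with
`log h = log(σ²/2π) + Σ_i c_i log(1 − ξ^i z^{−1})` (`c_i = ±1`, `|ξ^i| < 1`), the Kähler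
potential on the constant-σ submanifold — the squared Hardy norm of the non-constant part
of the logarithmic transfer function — equals `Σ_{r≥1} (1/r²)|Σ_i c_i (ξ^i)^r|²`. -/
theorem stmt12 {n : ℕ} (c : Fin n → ℤ) (hc : ∀ i, c i = 1 ∨ c i = -1)
    (ξ : Fin n → ℂ) (hξ : ∀ i, ‖ξ i‖ < 1) :
    (1 / (2 * Real.pi)) *
        ∫ w in (0 : ℝ)..(2 * Real.pi),
          ‖∑ i, (c i : ℂ) * Complex.log (1 - ξ i * Complex.exp (-(Complex.I * (w : ℂ))))‖ ^ 2
      = ∑' r : ℕ, (1 / ((r + 1 : ℕ) : ℝ) ^ 2) * ‖∑ i, (c i : ℂ) * (ξ i) ^ (r + 1)‖ ^ 2 := by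
  rw [kahler_aux c hc ξ hξ, ← mul_assoc, one_div,
    inv_mul_cancel₀ (by positivity : (2 * Real.pi) ≠ 0), one_mul]
end

section
/- For the ARMA(p,q) model, the nontrivial 0-connection components are Γ^{(0)}_{ij,¯k} = c_j c_k · δ_{ij} · conj(ξ^k) / (1 − ξ^j conj(ξ^k))². -/
/-- Holomorphic partial derivative `∂_i F` in the `i`-th complex coordinate. -/
noncomputable def pd {n : ℕ} (F : (Fin n → ℂ) → ℂ) (i : Fin n) (ξ : Fin n → ℂ) : ℂ :=
  deriv (fun t => F (Function.update ξ i t)) (ξ i)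

/-- The coefficients `η_r(ξ) = −(1/r) Σ_i c_i (ξ^i)^r` of the logarithmic ARMA transfer
function. -/
noncomputable def etaARMA {n : ℕ} (c : Fin n → ℤ) (r : ℕ) (ξ : Fin n → ℂ) : ℂ :=
  -(1 / (r : ℂ)) * ∑ m, (c m : ℂ) * (ξ m) ^ r

lemma pd_eta {n : ℕ} (c : Fin n → ℤ) (r : ℕ) (k : Fin n) (ξ : Fin n → ℂ) :
    pd (etaARMA c (r + 1)) k ξ = -(c k : ℂ) * ξ k ^ r := by
  have hfun : ∀ t : ℂ, etaARMA c (r + 1) (Function.update ξ k t)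
      = -(1 / ((r : ℂ) + 1)) * ((c k : ℂ) * t ^ (r + 1)
          + ∑ m ∈ Finset.univ.erase k, (c m : ℂ) * (ξ m) ^ (r + 1)) := by
    intro t
    rw [etaARMA]
    push_cast
    congr 1
    rw [← Finset.add_sum_erase _ _ (Finset.mem_univ k)]
    simp only [Function.update_self]
    congr 1
    refine Finset.sum_congr rfl fun m hm => ?_
    rw [Function.update_of_ne (Finset.ne_of_mem_erase hm)]
  rw [pd]
  simp only [hfun]
  rw [deriv_const_mul]
  · rw [deriv_fun_add, deriv_const_mul, deriv_pow_field]
    · have hr : ((r : ℂ) + 1) ≠ 0 := Nat.cast_add_one_ne_zero r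
      simp only [deriv_const']
      field_simp
      rw [Nat.add_sub_cancel]; push_cast; ring
    · exact differentiable_pow _ |>.differentiableAt
    · exact (differentiable_pow _ |>.differentiableAt).const_mul _
    · exact differentiableAt_const _
  · exact ((differentiable_pow _ |>.differentiableAt).const_mul _).add
      (differentiableAt_const _)

lemma pd_pd_eta {n : ℕ} (c : Fin n → ℤ) (r : ℕ) (i j : Fin n) (ξ : Fin n → ℂ) :
    pd (fun ξ' => pd (etaARMA c (r + 1)) i ξ') j ξ
      = if i = j then -(c i : ℂ) * ((r : ℂ) * ξ i ^ (r - 1)) else 0 := by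
  rw [pd]
  simp only [pd_eta]
  by_cases h : i = j
  · subst h
    simp only [Function.update_self, if_true]
    rw [deriv_const_mul _ (differentiable_pow _ |>.differentiableAt), deriv_pow_field]
  · simp only [Function.update_of_ne h, if_neg h, deriv_const']

/-- ARMA(p,q) 0-connection components:
`Γ^{(0)}_{ij,¯k} = Σ_{r≥1} ∂_i∂_j η_r · conj(∂_k η_r)
  = c_j c_k δ_{ij} conj(ξ^k) / (1 − ξ^j conj(ξ^k))²`. -/
theorem stmt14 {n : ℕ} (c : Fin n → ℤ) (hc : ∀ m, c m = 1 ∨ c m = -1)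
    (ξ : Fin n → ℂ) (hξ : ∀ m, ‖ξ m‖ < 1) (i j k : Fin n) :
    ∑' r : ℕ,
        pd (fun ξ' => pd (etaARMA c (r + 1)) i ξ') j ξ
          * starRingEnd ℂ (pd (etaARMA c (r + 1)) k ξ)
      = (if i = j then 1 else 0) * (c j : ℂ) * (c k : ℂ) * starRingEnd ℂ (ξ k)
          / (1 - ξ j * starRingEnd ℂ (ξ k)) ^ 2 := by
  by_cases h : i = j
  · subst h
    simp only [pd_pd_eta]
    simp only [pd_eta, if_true]
    set w := starRingEnd ℂ (ξ k) with hw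
    set z := ξ i * w with hz
    have hzlt : ‖z‖ < 1 := by
      rw [hz, norm_mul, hw]
      have h1 := hξ i
      have h2 : ‖starRingEnd ℂ (ξ k)‖ < 1 := by
        rw [RingHomIsometric.norm_map]; exact hξ k
      nlinarith [norm_nonneg (ξ i), norm_nonneg (starRingEnd ℂ (ξ k))]
    have hne : (1 : ℂ) - z ≠ 0 := by
      intro h0
      have : z = 1 := by linear_combination -h0
      rw [this] at hzlt; simp at hzlt
    have h1 : HasSum (fun r : ℕ => ((r : ℂ) + 1) * z ^ r) (1 / (1 - z) ^ 2) := by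
      have hsum := (hasSum_coe_mul_geometric_of_norm_lt_one hzlt).add
        (hasSum_geometric_of_norm_lt_one hzlt)
      have he : z / (1 - z) ^ 2 + (1 - z)⁻¹ = 1 / (1 - z) ^ 2 := by
        field_simp
        ring
      rw [he] at hsum
      have hf : (fun r : ℕ => ((r : ℂ) + 1) * z ^ r)
          = fun b : ℕ => (b : ℂ) * z ^ b + z ^ b := by
        funext r; ring
      rw [hf]
      exact hsum
    have h2 : HasSum (fun r : ℕ => ((r : ℂ) + 1) * z ^ r * ((c i : ℂ) * (c k : ℂ) * w))
        (1 / (1 - z) ^ 2 * ((c i : ℂ) * (c k : ℂ) * w)) := h1.mul_right _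
    set F : ℕ → ℂ := fun r =>
      (-(c i : ℂ) * ((r : ℂ) * ξ i ^ (r - 1))) * starRingEnd ℂ (-(c k : ℂ) * ξ k ^ r)
      with hF
    have hterm : ∀ s : ℕ, F (s + 1) = ((s : ℂ) + 1) * z ^ s * ((c i : ℂ) * (c k : ℂ) * w) := by
      intro s
      rw [hF]
      simp only [Nat.add_sub_cancel, map_mul, map_neg, map_pow, map_intCast]
      rw [hz, hw]
      push_cast
      ring
    have h3 : HasSum F (1 / (1 - z) ^ 2 * ((c i : ℂ) * (c k : ℂ) * w)) := by
      have h4 : HasSum (fun r : ℕ => F (r + 1))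
          (1 / (1 - z) ^ 2 * ((c i : ℂ) * (c k : ℂ) * w)) := by
        have : (fun r : ℕ => F (r + 1))
            = fun r : ℕ => ((r : ℂ) + 1) * z ^ r * ((c i : ℂ) * (c k : ℂ) * w) := by
          funext r; exact hterm r
        rw [this]; exact h2
      have h5 := (hasSum_nat_add_iff (f := F) 1).mp h4
      have hF0 : F 0 = 0 := by simp [hF]
      simpa [hF0] using h5
    rw [h3.tsum_eq]
    rw [hz]
    field_simp
  · simp only [pd_pd_eta, if_neg h, zero_mul, tsum_zero]
    simp
end
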